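/- arXiv:1612.06298 — 5 statements merged into one kernel-verified Lean document; each statement's English description precedes it below -/
import Mathlib

section
/- Let (R, m) be a local ring such that for every n and every n-tuple f of polynomials in R[X₁,…,Xₙ] with f(0) ∈ mⁿ and Jacobian determinant J(0) a unit, there exists a unique a ∈ mⁿ with f(a) = 0. Then R is a Henselian local ring. -/
open MvPolynomial IsLocalRing

/-- a local ring satisfying the multivariate Hensel condition (H)
(with the discrete topology) for every `n` is a Henselian local ring. -/
theorem henselianLocalRing_of_mvHenselCondition
    (R : Type*) [CommRing R] [IsLocalRing R]
    (H : ∀ n : ℕ, ∀ f : Fin n → MvPolynomial (Fin n) R,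
      (∀ i, eval (0 : Fin n → R) (f i) ∈ maximalIdeal R) →
      IsUnit (Matrix.of fun i j => eval (0 : Fin n → R) (pderiv j (f i))).det →
      ∃! a : Fin n → R, (∀ i, a i ∈ maximalIdeal R) ∧ ∀ i, eval a (f i) = 0) :
    HenselianLocalRing R := by
  constructor
  intro p hp a₀ h0 h1
  -- the shifted polynomial as a 1-variable MvPolynomial
  set F : Fin 1 → MvPolynomial (Fin 1) R :=
    fun _ => Polynomial.aeval (X 0 + C a₀) p with hF
  have evalF : ∀ (a : Fin 1 → R) (q : Polynomial R),
      eval a (Polynomial.aeval (X 0 + C a₀ : MvPolynomial (Fin 1) R) q)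
        = Polynomial.eval (a 0 + a₀) q := by
    intro a q
    rw [show eval a (Polynomial.aeval (X 0 + C a₀ : MvPolynomial (Fin 1) R) q)
        = aeval a (Polynomial.aeval (X 0 + C a₀ : MvPolynomial (Fin 1) R) q) from rfl,
      ← Polynomial.aeval_algHom_apply (MvPolynomial.aeval a)]
    simp [Polynomial.aeval_def]
  have hder : ∀ i j : Fin 1,
      eval (0 : Fin 1 → R) (pderiv j (F i))
        = Polynomial.eval a₀ (Polynomial.derivative p) := by
    intro i j
    have : (pderiv j) (F i)
        = Polynomial.aeval (X 0 + C a₀ : MvPolynomial (Fin 1) R)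
            (Polynomial.derivative p) * 1 := by
      rw [hF]
      rw [Derivation.map_aeval]
      have : (pderiv j) (X 0 + C a₀ : MvPolynomial (Fin 1) R) = 1 := by
        have hj : j = 0 := Subsingleton.elim j 0
        subst hj
        rw [map_add, pderiv_C, add_zero, pderiv_X_self]
      rw [this]; rw [smul_eq_mul]
    rw [this, mul_one, evalF]
    simp
  obtain ⟨a, ⟨ham, haz⟩, -⟩ := H 1 F
    (fun i => by rw [hF]; rw [evalF]; simpa using h0)
    (by
      rw [Matrix.det_fin_one, Matrix.of_apply, hder 0 0]
      exact h1)
  refine ⟨a 0 + a₀, ?_, by simpa using ham 0⟩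
  have := haz 0
  rw [hF, evalF] at this
  exact this
end

section
/- Let (R, m) be a Henselian local ring satisfying the multivariate Hensel condition, and let f be an n-tuple of polynomials in R[X₁,…,Xₙ] with f(0) ∈ mⁿ and Jacobian determinant J(0) ∈ R^×. Then the bijection f : mⁿ → mⁿ is a homeomorphism in the m-adic topology: for every k ≥ 1, x ≡ x' mod (m^k)ⁿ if and only if f(x) ≡ f(x') mod (m^k)ⁿ, for x, x' ∈ mⁿ. -/
open MvPolynomial IsLocalRing

lemma taylor_aux {R : Type*} [CommRing R] {n : ℕ} (p : MvPolynomial (Fin n) R)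
    (x y : Fin n → R) :
    ∃ c : Fin n → R, (eval x p - eval y p = ∑ j, c j * (x j - y j)) ∧
      ∀ j, c j - eval y (pderiv j p) ∈ Ideal.span (Set.range fun i => x i - y i) := by
  induction p using MvPolynomial.induction_on with
  | C a => exact ⟨0, by simp, by simp⟩
  | add p q hp hq =>
    obtain ⟨c, hc, hc'⟩ := hp
    obtain ⟨d, hd, hd'⟩ := hq
    refine ⟨c + d, ?_, fun j => ?_⟩
    · simp only [map_add, Pi.add_apply, add_mul, Finset.sum_add_distrib, ← hc, ← hd]
      ring
    · have := Ideal.add_mem _ (hc' j) (hd' j)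
      simpa [map_add, sub_add_sub_comm] using this
  | mul_X p i hp =>
    obtain ⟨c, hc, hc'⟩ := hp
    refine ⟨fun j => c j * y i + if j = i then eval x p else 0, ?_, fun j => ?_⟩
    · have key : ∀ j, (c j * y i + if j = i then eval x p else 0) * (x j - y j)
          = c j * (x j - y j) * y i + (if j = i then eval x p * (x j - y j) else 0) := by
        intro j; split <;> ring
      rw [Finset.sum_congr rfl fun j _ => key j, Finset.sum_add_distrib,
        Finset.sum_ite_eq' Finset.univ i]
      simp only [Finset.mem_univ, if_true, ← Finset.sum_mul, ← hc]
      simp only [eval_mul, eval_X]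
      ring
    · have hder : eval y (pderiv j (p * X i))
          = eval y (pderiv j p) * y i + (if j = i then eval y p else 0) := by
        by_cases hji : j = i
        · subst hji; simp [pderiv_mul, pderiv_X]; ring
        · have hij : ¬i = j := fun h => hji h.symm
          simp [pderiv_mul, pderiv_X, hji, hij]; ring
      rw [hder]
      have h1 : (c j - eval y (pderiv j p)) * y i
          ∈ Ideal.span (Set.range fun i => x i - y i) :=
        Ideal.mul_mem_right _ _ (hc' j)
      have h2 : (if j = i then eval x p - eval y p else 0)
          ∈ Ideal.span (Set.range fun i => x i - y i) := by
        split
        · rw [hc]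
          exact Ideal.sum_mem _ fun j _ =>
            Ideal.mul_mem_left _ _ (Ideal.subset_span ⟨j, rfl⟩)
        · exact Ideal.zero_mem _
      have heq : (c j * y i + if j = i then eval x p else 0)
          - (eval y (pderiv j p) * y i + if j = i then eval y p else 0)
          = (c j - eval y (pderiv j p)) * y i
            + (if j = i then eval x p - eval y p else 0) := by
        split <;> ring
      rw [heq]
      exact add_mem h1 h2

lemma eval_sub_mem_of_sub_mem {R : Type*} [CommRing R] {n : ℕ}
    (p : MvPolynomial (Fin n) R) (x y : Fin n → R) (I : Ideal R)
    (h : ∀ j, x j - y j ∈ I) : eval x p - eval y p ∈ I := by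
  obtain ⟨c, hc, -⟩ := taylor_aux p x y
  rw [hc]
  exact Ideal.sum_mem _ fun j _ => Ideal.mul_mem_left _ _ (h j)

/-- over a Henselian local ring, for `f` with `f(0) ∈ mⁿ` and unit
Jacobian determinant at `0`, the bijection `f : mⁿ → mⁿ` is a homeomorphism in
the `m`-adic topology: for every `k ≥ 1` and `x, x' ∈ mⁿ`,
`x ≡ x' mod (m^k)ⁿ` iff `f(x) ≡ f(x') mod (m^k)ⁿ`. -/
theorem henselian_polynomial_map_adic_homeomorph
    {R : Type*} [CommRing R] [HenselianLocalRing R] {n : ℕ}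
    (f : Fin n → MvPolynomial (Fin n) R)
    (hf0 : ∀ i, eval (0 : Fin n → R) (f i) ∈ maximalIdeal R)
    (hJ : IsUnit (Matrix.of fun i j => eval (0 : Fin n → R) (pderiv j (f i))).det) :
    ∀ k : ℕ, 1 ≤ k → ∀ x x' : Fin n → R,
      (∀ i, x i ∈ maximalIdeal R) → (∀ i, x' i ∈ maximalIdeal R) →
      ((∀ i, x i - x' i ∈ (maximalIdeal R) ^ k) ↔
        (∀ i, eval x (f i) - eval x' (f i) ∈ (maximalIdeal R) ^ k)) := by
  intro k hk x x' hx hx'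
  constructor
  · intro h i
    exact eval_sub_mem_of_sub_mem _ x x' _ h
  · intro h
    choose c hc hc' using fun i => taylor_aux (f i) x x'
    set A : Matrix (Fin n) (Fin n) R := Matrix.of fun i j => c i j with hA
    set J0 : Matrix (Fin n) (Fin n) R :=
      Matrix.of fun i j => eval (0 : Fin n → R) (pderiv j (f i)) with hJ0
    have hsub : ∀ j, x j - x' j ∈ maximalIdeal R := fun j =>
      sub_mem (hx j) (hx' j)
    have hspan : Ideal.span (Set.range fun i => x i - x' i) ≤ maximalIdeal R := by
      rw [Ideal.span_le]
      rintro r ⟨j, rfl⟩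
      exact hsub j
    have hAm : ∀ i j, A i j - J0 i j ∈ maximalIdeal R := by
      intro i j
      have h1 : c i j - eval x' (pderiv j (f i)) ∈ maximalIdeal R :=
        hspan (hc' i j)
      have h2 : eval x' (pderiv j (f i)) - eval (0 : Fin n → R) (pderiv j (f i))
          ∈ maximalIdeal R :=
        eval_sub_mem_of_sub_mem _ _ _ _ (fun j => by simpa using hx' j)
      have := add_mem h1 h2
      simpa [hA, hJ0] using this
    have hdetm : A.det - J0.det ∈ maximalIdeal R := by
      rw [← Ideal.Quotient.eq_zero_iff_mem, map_sub, sub_eq_zero]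
      let π := Ideal.Quotient.mk (maximalIdeal R)
      show π A.det = π J0.det
      rw [RingHom.map_det, RingHom.map_det]
      congr 1
      ext i j
      exact (Ideal.Quotient.mk_eq_mk_iff_sub_mem _ _).mpr (hAm i j)
    have hdet : IsUnit A.det := by
      by_contra hnot
      have hAmem : A.det ∈ maximalIdeal R := hnot
      have : J0.det ∈ maximalIdeal R := by
        have := sub_mem hAmem hdetm
        simpa using this
      exact this hJ
    have : Invertible A := A.invertibleOfIsUnitDet hdet
    have hfv : A.mulVec (fun j => x j - x' j)
        = fun i => eval x (f i) - eval x' (f i) := by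
      funext i
      simp only [Matrix.mulVec, dotProduct, hA, Matrix.of_apply]
      exact (hc i).symm
    intro i
    have hxi : x i - x' i
        = (⅟A).mulVec (fun i => eval x (f i) - eval x' (f i)) i := by
      rw [← hfv, Matrix.mulVec_mulVec, invOf_mul_self, Matrix.one_mulVec]
    rw [hxi]
    simp only [Matrix.mulVec, dotProduct]
    exact Ideal.sum_mem _ fun j _ => Ideal.mul_mem_left _ _ (h j)
end

section
/- Let R be the valuation ring of a Henselian valued field, m its maximal ideal, and p = (p_{r+1},…,p_n) as in the implicit function theorem with e ≠ 0. Then any point x ∈ V = {x ∈ Rⁿ : p(x) = 0} with first r coordinates in e²·m and last n−r coordinates in e·m satisfies x = (u, φ(u)) where u is the tuple of first r coordinates; that is, the implicit function φ is unique on its domain. -/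
open MvPolynomial IsLocalRing

lemma taylor_mem' {σ : Type*} [DecidableEq σ] [Fintype σ] {R : Type*} [CommRing R]
    (q : MvPolynomial σ R) (x d : σ → R) :
    eval (x + d) q - eval x q - ∑ τ, eval x (pderiv τ q) * d τ ∈
      Ideal.span {z : R | ∃ τ τ', z = d τ * d τ'} := by
  induction q using MvPolynomial.induction_on with
  | C a => simp
  | add q1 q2 h1 h2 =>
    have key : eval (x + d) (q1 + q2) - eval x (q1 + q2)
          - ∑ τ, eval x (pderiv τ (q1 + q2)) * d τ
        = (eval (x + d) q1 - eval x q1 - ∑ τ, eval x (pderiv τ q1) * d τ)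
          + (eval (x + d) q2 - eval x q2 - ∑ τ, eval x (pderiv τ q2) * d τ) := by
      simp only [map_add, add_mul]
      rw [Finset.sum_add_distrib]
      ring
    rw [key]
    exact Ideal.add_mem _ h1 h2
  | mul_X q n h =>
    have hsum : ∑ τ, eval x (pderiv τ (q * X n)) * d τ
        = x n * (∑ τ, eval x (pderiv τ q) * d τ) + eval x q * d n := by
      simp only [pderiv_mul, pderiv_X, map_add, map_mul, eval_X, Pi.single_apply,
        apply_ite (eval x), map_one, map_zero, mul_ite, mul_one, mul_zero, ite_mul, zero_mul,
        add_mul, Finset.sum_add_distrib, Finset.sum_ite_eq, Finset.mem_univ, if_true,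
        Finset.mul_sum]
      congr 1
      apply Finset.sum_congr rfl; intro τ _; ring
    have hL : d n * (∑ τ, eval x (pderiv τ q) * d τ) ∈
        Ideal.span {z : R | ∃ τ τ', z = d τ * d τ'} := by
      rw [Finset.mul_sum]
      refine Ideal.sum_mem _ fun τ _ => ?_
      have : d n * (eval x (pderiv τ q) * d τ) = eval x (pderiv τ q) * (d n * d τ) := by ring
      rw [this]
      exact Ideal.mul_mem_left _ _ (Ideal.subset_span ⟨n, τ, rfl⟩)
    have key : eval (x + d) (q * X n) - eval x (q * X n)
          - ∑ τ, eval x (pderiv τ (q * X n)) * d τ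
        = x n * (eval (x + d) q - eval x q - ∑ τ, eval x (pderiv τ q) * d τ)
          + d n * (eval (x + d) q - eval x q - ∑ τ, eval x (pderiv τ q) * d τ)
          + d n * (∑ τ, eval x (pderiv τ q) * d τ) := by
      rw [hsum]; simp only [map_mul, eval_X, Pi.add_apply]; ring
    rw [key]
    exact Ideal.add_mem _
      (Ideal.add_mem _ (Ideal.mul_mem_left _ _ h) (Ideal.mul_mem_left _ _ h)) hL

lemma eval_sub_eval_zero_mem' {σ : Type*} {R : Type*} [CommRing R]
    (q : MvPolynomial σ R) (x : σ → R) :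
    eval x q - eval 0 q ∈ Ideal.span (Set.range x) := by
  induction q using MvPolynomial.induction_on with
  | C a => simp
  | add q1 q2 h1 h2 =>
    have key : eval x (q1 + q2) - eval 0 (q1 + q2)
        = (eval x q1 - eval 0 q1) + (eval x q2 - eval 0 q2) := by
      simp only [map_add]; ring
    rw [key]
    exact Ideal.add_mem _ h1 h2
  | mul_X q n h =>
    simp only [map_mul, eval_X, Pi.zero_apply, mul_zero]
    rw [sub_zero]
    exact Ideal.mul_mem_left _ _ (Ideal.subset_span ⟨n, rfl⟩)

theorem implicit_function_uniqueness_aux {K : Type*} [Field K] (A : ValuationSubring K)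
    {r s : ℕ} (hs : 0 < s)
    (p : Fin s → MvPolynomial (Fin r ⊕ Fin s) A)
    (e : A)
    (he : e = (Matrix.of fun i j => eval 0 (pderiv (Sum.inr j) (p i))).det)
    (hne : e ≠ 0)
    (φ : (Fin r → A) → (Fin s → A))
    (hφm : ∀ u : Fin r → A, (∀ i, ∃ t ∈ maximalIdeal A, u i = e ^ 2 * t) →
      ∀ j, ∃ t ∈ maximalIdeal A, φ u j = e * t)
    (hφgraph : ∀ u : Fin r → A, (∀ i, ∃ t ∈ maximalIdeal A, u i = e ^ 2 * t) →
      ∀ i, eval (Sum.elim u (φ u)) (p i) = 0) :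
    ∀ x : Fin r ⊕ Fin s → A,
      (∀ i, ∃ t ∈ maximalIdeal A, x (Sum.inl i) = e ^ 2 * t) →
      (∀ j, ∃ t ∈ maximalIdeal A, x (Sum.inr j) = e * t) →
      (∀ i, eval x (p i) = 0) →
      ∀ j, x (Sum.inr j) = φ (fun i => x (Sum.inl i)) j := by
  classical
  intro x hx1 hx2 hxz
  set u : Fin r → A := fun i => x (Sum.inl i) with hudef
  have hu2 : ∀ i, ∃ t ∈ maximalIdeal A, u i = e ^ 2 * t := hx1
  choose t ht htx using hx2
  choose t' ht' ht'x using hφm u hu2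
  set τv : Fin s → A := fun j => t' j - t j with hτdef
  have hτm : ∀ j, τv j ∈ maximalIdeal A := fun j => sub_mem (ht' j) (ht j)
  set y : Fin r ⊕ Fin s → A := Sum.elim u (φ u) with hydef
  set d : Fin r ⊕ Fin s → A := fun σ => y σ - x σ with hddef
  have hdl : ∀ i, d (Sum.inl i) = 0 := fun i => sub_self _
  have hdr : ∀ j, d (Sum.inr j) = e * τv j := by
    intro j
    show y (Sum.inr j) - x (Sum.inr j) = e * (t' j - t j)
    rw [hydef, Sum.elim_inr, ht'x j, htx j, mul_sub]
  have hxd : x + d = y := by funext σ; simp [hddef]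
  set I : Ideal A := Ideal.span {z : A | ∃ σ σ', z = d σ * d σ'} with hIdef
  have hy0 : ∀ i, eval y (p i) = 0 := hφgraph u hu2
  -- Taylor expansion: the linear part lies in I
  have hstep : ∀ i, (∑ j, eval x (pderiv (Sum.inr j) (p i)) * d (Sum.inr j)) ∈ I := by
    intro i
    have h := taylor_mem' (p i) x d
    rw [hxd, hy0 i, hxz i] at h
    have h' := I.neg_mem h
    simp only [zero_sub, neg_sub, sub_zero, neg_neg, sub_neg_eq_add, zero_add] at h'
    rw [Fintype.sum_sum_type] at h'
    have hz : ∑ i', eval x (pderiv (Sum.inl i') (p i)) * d (Sum.inl i') = 0 := by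
      apply Finset.sum_eq_zero; intro i' _; rw [hdl, mul_zero]
    rwa [hz, zero_add] at h'
  set Amat : Matrix (Fin s) (Fin s) A :=
    Matrix.of fun i j => eval x (pderiv (Sum.inr j) (p i)) with hAmat
  set dv : Fin s → A := fun j => d (Sum.inr j) with hdv
  have hmv : ∀ i, (Amat.mulVec dv) i ∈ I := by
    intro i
    simpa [Matrix.mulVec, dotProduct, hAmat, hdv] using hstep i
  have hdet_dv : ∀ j, Amat.det * dv j ∈ I := by
    have h1 : Amat.adjugate.mulVec (Amat.mulVec dv) = Amat.det • dv := by
      rw [Matrix.mulVec_mulVec, Matrix.adjugate_mul, Matrix.smul_mulVec,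
        Matrix.one_mulVec]
    intro j
    have h2 : (Amat.det • dv) j ∈ I := by
      rw [← h1]
      simp only [Matrix.mulVec, dotProduct]
      exact Ideal.sum_mem _ fun k _ => Ideal.mul_mem_left _ _ (hmv k)
    simpa using h2
  -- the determinant is congruent to e modulo the ideal generated by the x σ
  have hdet_sub : Amat.det - e ∈ Ideal.span (Set.range x) := by
    rw [← Ideal.Quotient.eq]
    have h1 := (Ideal.Quotient.mk (Ideal.span (Set.range x))).map_det Amat
    have h2 := (Ideal.Quotient.mk (Ideal.span (Set.range x))).map_det
      (Matrix.of fun i j => eval (0 : Fin r ⊕ Fin s → A) (pderiv (Sum.inr j) (p i)))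
    have hmap : (Ideal.Quotient.mk (Ideal.span (Set.range x))).mapMatrix Amat =
        (Ideal.Quotient.mk (Ideal.span (Set.range x))).mapMatrix
          (Matrix.of fun i j => eval (0 : Fin r ⊕ Fin s → A) (pderiv (Sum.inr j) (p i))) := by
      ext i j
      simp only [RingHom.mapMatrix_apply, Matrix.map_apply, Matrix.of_apply, hAmat]
      exact Ideal.Quotient.eq.mpr (eval_sub_eval_zero_mem' _ x)
    rw [h1, hmap, ← h2, he]
  have hspan : ∀ z ∈ Ideal.span (Set.range x), ∃ μ ∈ maximalIdeal A, z = e * μ := by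
    intro z hz
    induction hz using Submodule.span_induction with
    | mem z hzmem =>
      obtain ⟨σ, rfl⟩ := hzmem
      cases σ with
      | inl i =>
        obtain ⟨w, hw, hweq⟩ := hx1 i
        exact ⟨e * w, Ideal.mul_mem_left _ _ hw, by rw [hweq]; ring⟩
      | inr j => exact ⟨t j, ht j, htx j⟩
    | zero => exact ⟨0, Submodule.zero_mem _, by ring⟩
    | add a b _ _ ha hb =>
      obtain ⟨μ1, hμ1, h1⟩ := ha
      obtain ⟨μ2, hμ2, h2⟩ := hb
      exact ⟨μ1 + μ2, Ideal.add_mem _ hμ1 hμ2, by rw [h1, h2]; ring⟩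
    | smul c z _ hz =>
      obtain ⟨μ, hμ, h1⟩ := hz
      exact ⟨c * μ, Ideal.mul_mem_left _ _ hμ, by rw [smul_eq_mul, h1]; ring⟩
  obtain ⟨μ, hμ, hμeq⟩ := hspan _ hdet_sub
  have hdet_eq : Amat.det = e * (1 + μ) := by
    have : Amat.det - e = e * μ := hμeq
    rw [mul_add, mul_one, ← this]; ring
  have hvdet : A.valuation (Amat.det : K) = A.valuation (e : K) := by
    rw [hdet_eq]
    push_cast
    rw [map_mul]
    have h1 : A.valuation ((1 : K) + (μ : K)) = 1 :=
      Valuation.map_one_add_of_lt _ ((A.valuation_lt_one_iff μ).mp hμ)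
    rw [h1, mul_one]
  have hve : A.valuation (e : K) ≠ 0 := by
    rw [Valuation.ne_zero_iff]
    exact fun h => hne (Subtype.ext h)
  -- the maximum M of the valuations of the τv j
  obtain ⟨j0, -, hj0⟩ := Finset.exists_max_image (Finset.univ : Finset (Fin s))
    (fun j => A.valuation ((τv j : K))) ⟨⟨0, hs⟩, Finset.mem_univ _⟩
  set M : A.ValueGroup := A.valuation ((τv j0 : K)) with hMdef
  have hMlt : M < 1 := (A.valuation_lt_one_iff _).mp (hτm j0)
  have hMmax : ∀ j, A.valuation ((τv j : K)) ≤ M := fun j => hj0 j (Finset.mem_univ j)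
  -- every element of I has valuation at most (v e)^2 * (M * M)
  have hIbound : ∀ z ∈ I, A.valuation (z : K) ≤
      (A.valuation (e : K) * A.valuation (e : K)) * (M * M) := by
    intro z hz
    induction hz using Submodule.span_induction with
    | mem z hzmem =>
      obtain ⟨σ, σ', rfl⟩ := hzmem
      rcases σ with i | j
      · rw [hdl]; simp
      rcases σ' with i | k
      · rw [hdl]; simp
      rw [hdr, hdr]
      push_cast
      rw [map_mul, map_mul, map_mul]
      calc A.valuation (e : K) * A.valuation ((τv j : K)) *
            (A.valuation (e : K) * A.valuation ((τv k : K)))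
          = (A.valuation (e : K) * A.valuation (e : K)) *
            (A.valuation ((τv j : K)) * A.valuation ((τv k : K))) := mul_mul_mul_comm _ _ _ _
        _ ≤ (A.valuation (e : K) * A.valuation (e : K)) * (M * M) :=
            mul_le_mul_right (mul_le_mul' (hMmax j) (hMmax k)) _
    | zero => simp
    | add a b _ _ ha hb =>
      calc A.valuation (((a + b : A) : K)) ≤
          max (A.valuation ((a : A) : K)) (A.valuation ((b : A) : K)) := by
            push_cast; exact Valuation.map_add _ _ _
        _ ≤ _ := max_le ha hb
    | smul c z _ hz =>
      have : A.valuation (((c • z : A) : K)) = A.valuation ((c : K)) * A.valuation ((z : K)) := by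
        rw [smul_eq_mul]; push_cast; exact map_mul _ _ _
      rw [this]
      calc A.valuation ((c : K)) * A.valuation ((z : K))
          ≤ 1 * ((A.valuation (e : K) * A.valuation (e : K)) * (M * M)) :=
            mul_le_mul' (A.valuation_le_one c) hz
        _ = _ := one_mul _
  -- conclude v(τv j) ≤ M * M for all j
  have hfin : ∀ j, A.valuation ((τv j : K)) ≤ M * M := by
    intro j
    have h1 := hIbound _ (hdet_dv j)
    have h2 : A.valuation (((Amat.det * dv j : A) : K)) =
        (A.valuation (e : K) * A.valuation (e : K)) * A.valuation ((τv j : K)) := by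
      have hdvj : dv j = e * τv j := hdr j
      push_cast
      rw [map_mul, hvdet, hdvj]
      push_cast
      rw [map_mul, ← mul_assoc]
    rw [h2] at h1
    have hpos : (0 : A.ValueGroup) < A.valuation (e : K) * A.valuation (e : K) :=
      zero_lt_iff.mpr (mul_ne_zero hve hve)
    exact le_of_mul_le_mul_left h1 hpos
  have hM0 : M = 0 := by
    by_contra hM
    have h1 : M ≤ M * M := hfin j0
    have h2 : (1 : A.ValueGroup) ≤ M := (le_mul_iff_one_le_left (zero_lt_iff.mpr hM)).mp h1
    exact absurd (lt_of_le_of_lt h2 hMlt) (lt_irrefl _)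
  have hτ0 : ∀ j, τv j = 0 := by
    intro j
    have h1 : A.valuation ((τv j : K)) ≤ 0 := by
      have := hfin j
      rwa [hM0, mul_zero] at this
    have h2 : A.valuation ((τv j : K)) = 0 := le_antisymm h1 (zero_le')
    exact Subtype.ext ((Valuation.zero_iff _).mp h2)
  intro j
  have h1 : t' j = t j := sub_eq_zero.mp (hτ0 j)
  show x (Sum.inr j) = φ u j
  rw [htx j, ht'x j, h1]

/-- uniqueness of the implicit function. Any point `x` of the zero
locus `V` whose first `r` coordinates lie in `e²·m` and last `s` coordinates lie
in `e·m` is on the graph of `φ`. -/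
theorem implicit_function_uniqueness
    {K : Type*} [Field K] {Γ : Type*} [LinearOrderedCommGroupWithZero Γ]
    [Valued K Γ]
    [HenselianLocalRing ((Valued.v : Valuation K Γ).valuationSubring)]
    {r s : ℕ} (hs : 0 < s)
    (p : Fin s → MvPolynomial (Fin r ⊕ Fin s) ((Valued.v : Valuation K Γ).valuationSubring))
    (hp0 : ∀ i, eval 0 (p i) = 0)
    (e : ((Valued.v : Valuation K Γ).valuationSubring))
    (he : e = (Matrix.of fun i j => eval 0 (pderiv (Sum.inr j) (p i))).det)
    (hne : e ≠ 0)
    (φ : (Fin r → ((Valued.v : Valuation K Γ).valuationSubring)) →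
         (Fin s → ((Valued.v : Valuation K Γ).valuationSubring)))
    (hφcont : ContinuousOn φ {u | ∀ i, ∃ t ∈ maximalIdeal _, u i = e ^ 2 * t})
    (hφ0 : φ 0 = 0)
    (hφm : ∀ u, (∀ i, ∃ t ∈ maximalIdeal _, u i = e ^ 2 * t) →
      ∀ j, ∃ t ∈ maximalIdeal _, φ u j = e * t)
    (hφgraph : ∀ u, (∀ i, ∃ t ∈ maximalIdeal _, u i = e ^ 2 * t) →
      ∀ i, eval (Sum.elim u (φ u)) (p i) = 0) :
    ∀ x : Fin r ⊕ Fin s → ((Valued.v : Valuation K Γ).valuationSubring),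
      (∀ i, ∃ t ∈ maximalIdeal _, x (Sum.inl i) = e ^ 2 * t) →
      (∀ j, ∃ t ∈ maximalIdeal _, x (Sum.inr j) = e * t) →
      (∀ i, eval x (p i) = 0) →
      ∀ j, x (Sum.inr j) = φ (fun i => x (Sum.inl i)) j :=
  implicit_function_uniqueness_aux (Valued.v : Valuation K Γ).valuationSubring hs p e he hne φ
    hφm hφgraph
end

section
/- Let R be a complete linearly topologized Hausdorff commutative ring and m a closed ideal all of whose elements are topologically nilpotent. Let f = (f₁,…,fₙ) be restricted power series in R{X₁,…,Xₙ} with f(0) ∈ mⁿ and Jacobian determinant J(0) a unit of R. Then there exists a unique a ∈ mⁿ with f(a) = 0. -/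
set_option linter.unusedSectionVars false
set_option maxHeartbeats 1000000

open Filter

namespace MvHenselAux

variable {R : Type*} [CommRing R] [TopologicalSpace R] [IsTopologicalRing R]

/-- Approximate membership in an ideal: membership modulo every open ideal. -/
def Apx (J : Ideal R) (x : R) : Prop :=
  ∀ I : Ideal R, (I : Set R) ∈ nhds 0 → x ∈ J ⊔ I

theorem Apx.of_mem {J : Ideal R} {x : R} (h : x ∈ J) : Apx J x :=
  fun _ _ => Submodule.mem_sup_left h

theorem Apx.mono {J K : Ideal R} (hJK : J ≤ K) {x : R} (h : Apx J x) : Apx K x :=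
  fun I hI => (sup_le_sup_right hJK I) (h I hI)

theorem Apx.add {J : Ideal R} {x y : R} (hx : Apx J x) (hy : Apx J y) : Apx J (x + y) :=
  fun I hI => add_mem (hx I hI) (hy I hI)

theorem Apx.neg {J : Ideal R} {x : R} (hx : Apx J x) : Apx J (-x) :=
  fun I hI => neg_mem (hx I hI)

theorem Apx.mul_left {J : Ideal R} {x : R} (r : R) (hx : Apx J x) : Apx J (r * x) :=
  fun I hI => Ideal.mul_mem_left _ r (hx I hI)

theorem Apx.mul {J K : Ideal R} {x y : R} (hx : Apx J x) (hy : Apx K y) :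
    Apx (J * K) (x * y) := by
  intro I hI
  obtain ⟨a, ha, b, hb, hab⟩ := Submodule.mem_sup.mp (hx I hI)
  obtain ⟨c, hc, d, hd, hcd⟩ := Submodule.mem_sup.mp (hy I hI)
  have : x * y = a * c + (a * d + b * y) := by rw [← hab, ← hcd]; ring
  rw [this]
  exact Submodule.mem_sup.mpr ⟨a * c, Ideal.mul_mem_mul ha hc,
    a * d + b * y, add_mem (Ideal.mul_mem_left _ _ hd) (Ideal.mul_mem_right _ _ hb), rfl⟩

theorem Apx.sum {J : Ideal R} {ι : Type*} {s : Finset ι} {g : ι → R}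
    (h : ∀ t ∈ s, Apx J (g t)) : Apx J (∑ t ∈ s, g t) :=
  fun I hI => Ideal.sum_mem _ fun t ht => h t ht I hI

theorem Apx.hasSum {ι : Type*} {g : ι → R} {s : R} (hgs : HasSum g s) {J : Ideal R}
    (hg : ∀ d, g d ∈ J) : Apx J s := by
  intro I hI
  have h1 : Tendsto (fun t : Finset ι => s - ∑ d ∈ t, g d) atTop (nhds 0) := by
    simpa using (tendsto_const_nhds (x := s)).sub hgs
  obtain ⟨t, ht⟩ := (h1.eventually_mem hI).exists
  exact Submodule.mem_sup.mpr ⟨∑ d ∈ t, g d, Ideal.sum_mem _ fun d _ => hg d,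
    s - ∑ d ∈ t, g d, ht, by ring⟩

variable (hlin : ∀ U ∈ nhds (0 : R), ∃ I : Ideal R, (I : Set R) ⊆ U ∧ (I : Set R) ∈ nhds 0)
include hlin

theorem eq_zero_of_forall_mem [T2Space R] {x : R}
    (h : ∀ I : Ideal R, (I : Set R) ∈ nhds 0 → x ∈ I) : x = 0 := by
  have h1 : Tendsto (fun _ : ℕ => x) atTop (nhds 0) := by
    rw [tendsto_def]
    intro U hU
    obtain ⟨I, hIU, hI⟩ := hlin U hU
    filter_upwards with _ using hIU (h I hI)
  exact tendsto_nhds_unique tendsto_const_nhds h1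

theorem mem_of_apx {m J : Ideal R} (hm : IsClosed (m : Set R)) (hJm : J ≤ m) {x : R}
    (h : Apx J x) : x ∈ m := by
  have : x ∈ closure (m : Set R) := by
    rw [mem_closure_iff_nhds]
    intro U hU
    have h2 : (fun y : R => x + y) ⁻¹' U ∈ nhds 0 := by
      have hc : ContinuousAt (fun y : R => x + y) 0 := (continuous_add_left x).continuousAt
      exact hc.preimage_mem_nhds (by simpa using hU)
    obtain ⟨I, hIU, hI⟩ := hlin _ h2
    obtain ⟨a, ha, b, hb, hab⟩ := Submodule.mem_sup.mp (h I hI)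
    refine ⟨a, ?_, hJm ha⟩
    have : a = x + (-b) := by rw [← hab]; ring
    rw [this]
    exact hIU (neg_mem hb)
  rwa [hm.closure_eq] at this

theorem nonarch : NonarchimedeanAddGroup R := by
  constructor
  intro U hU
  obtain ⟨I, hIU, hI⟩ := hlin U hU
  exact ⟨⟨I.toAddSubgroup, AddSubgroup.isOpen_of_mem_nhds _ hI⟩, hIU⟩

/-- A finitely generated ideal whose generators are topologically nilpotent has
powers eventually inside any open ideal. -/
theorem span_pow_le (S : Finset R) (hS : ∀ x ∈ S, Tendsto (fun k : ℕ => x ^ k) atTop (nhds 0))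
    (I : Ideal R) (hI : (I : Set R) ∈ nhds 0) :
    ∃ K : ℕ, ∀ k ≥ K, Ideal.span (S : Set R) ^ k ≤ I := by
  suffices h : ∃ K : ℕ, Ideal.span (S : Set R) ^ K ≤ I by
    obtain ⟨K, hK⟩ := h
    exact ⟨K, fun k hk => le_trans (Ideal.pow_le_pow_right hk) hK⟩
  classical
  induction S using Finset.induction_on with
  | empty =>
    refine ⟨1, ?_⟩
    simp only [Finset.coe_empty, Ideal.span_empty, pow_one]
    exact bot_le
  | @insert a S' hx ih =>
    obtain ⟨K₁, hK₁⟩ := ih fun x hx => hS x (Finset.mem_insert_of_mem hx)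
    have ha : Tendsto (fun k : ℕ => a ^ k) atTop (nhds 0) := hS a (Finset.mem_insert_self a S')
    obtain ⟨t, ht⟩ := (ha.eventually_mem hI).exists
    refine ⟨t + K₁, ?_⟩
    rw [Finset.coe_insert, Ideal.span_insert]
    refine le_trans Ideal.sup_pow_add_le_pow_sup_pow (sup_le ?_ hK₁)
    rw [Ideal.span_singleton_pow, Ideal.span_le, Set.singleton_subset_iff]
    exact ht

omit [IsTopologicalRing R] in
omit hlin in
theorem exists_finset_of_mem_mul' {J K : Ideal R} {x : R} (h : x ∈ J * K) :
    ∃ S : Finset R, ↑S ⊆ (J : Set R) ∧ x ∈ Ideal.span (S : Set R) * K := by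
  classical
  refine Submodule.mul_induction_on h ?_ ?_
  · intro a ha b hb
    exact ⟨{a}, by simpa using ha,
      Ideal.mul_mem_mul (Ideal.subset_span (by simp)) hb⟩
  · rintro u v ⟨S₁, hS₁, hu⟩ ⟨S₂, hS₂, hv⟩
    refine ⟨S₁ ∪ S₂, ?_, ?_⟩
    · intro x hx
      rcases Finset.mem_union.mp (by exact_mod_cast hx) with h | h
      · exact hS₁ (by exact_mod_cast h)
      · exact hS₂ (by exact_mod_cast h)
    · have hle : ∀ (S : Finset R), S ⊆ S₁ ∪ S₂ →
          Ideal.span (S : Set R) * K ≤ Ideal.span ((S₁ ∪ S₂ : Finset R) : Set R) * K :=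
        fun S hS => Ideal.mul_mono_left (Ideal.span_mono (by exact_mod_cast hS))
      exact add_mem (hle S₁ Finset.subset_union_left hu) (hle S₂ Finset.subset_union_right hv)

end MvHenselAux


namespace MvHenselAux2

variable {R : Type*} [CommRing R] {ι : Type*} [Fintype ι] [DecidableEq ι]

theorem prod_sub_prod_mem (s : Finset ι) (u v : ι → R) (I : Ideal R)
    (h : ∀ j ∈ s, u j - v j ∈ I) :
    (∏ j ∈ s, u j) - (∏ j ∈ s, v j) ∈ I := by
  classical
  induction s using Finset.induction_on with
  | empty => simp
  | @insert a s' ha ih =>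
    rw [Finset.prod_insert ha, Finset.prod_insert ha]
    have : u a * ∏ j ∈ s', u j - v a * ∏ j ∈ s', v j
        = (u a - v a) * ∏ j ∈ s', u j + v a * ((∏ j ∈ s', u j) - ∏ j ∈ s', v j) := by ring
    rw [this]
    exact add_mem (Ideal.mul_mem_right _ _ (h a (Finset.mem_insert_self a s')))
      (Ideal.mul_mem_left _ _ (ih fun j hj => h j (Finset.mem_insert_of_mem hj)))

theorem pow_sub_pow_mem {a b : R} {I : Ideal R} (h : a - b ∈ I) (k : ℕ) :
    a ^ k - b ^ k ∈ I := by
  obtain ⟨c, hc⟩ := sub_dvd_pow_sub_pow a b k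
  rw [hc]
  exact Ideal.mul_mem_right _ _ h

theorem prod_pow_single (z : ι → R) (j₀ : ι) :
    (∏ j, z j ^ (Finsupp.single j₀ 1 : ι →₀ ℕ) j) = z j₀ := by
  rw [Finset.prod_eq_single j₀]
  · simp
  · intro j _ hj
    simp [Finsupp.single_apply, Ne.symm hj]
  · simp

theorem prod_pow_split (z : ι → R) {d : ι →₀ ℕ} {j₀ : ι} (hd : d j₀ ≠ 0) :
    (∏ j, z j ^ d j) = z j₀ * ∏ j, z j ^ (((d - Finsupp.single j₀ 1 : ι →₀ ℕ) j)) := by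
  rw [← Finset.mul_prod_erase Finset.univ _ (Finset.mem_univ j₀),
    ← Finset.mul_prod_erase Finset.univ (fun j => z j ^ (((d - Finsupp.single j₀ 1 : ι →₀ ℕ) j)))
      (Finset.mem_univ j₀), ← mul_assoc]
  congr 1
  · have h1 : ((d - Finsupp.single j₀ 1 : ι →₀ ℕ) j₀) = d j₀ - 1 := by
      simp [Finsupp.tsub_apply]
    rw [h1, ← pow_succ']
    congr 1
    omega
  · apply Finset.prod_congr rfl
    intro j hj
    have : j ≠ j₀ := (Finset.mem_erase.mp hj).1
    simp [Finsupp.tsub_apply, Finsupp.single_apply, Ne.symm this]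

theorem exists_apply_ne_zero {d : ι →₀ ℕ} (hd : d ≠ 0) : ∃ j, d j ≠ 0 := by
  by_contra h
  push_neg at h
  exact hd (Finsupp.ext fun j => h j)

theorem prod_pow_mem_span (z : ι → R) {d : ι →₀ ℕ} (hd : d ≠ 0) :
    (∏ j, z j ^ d j) ∈ Ideal.span (Set.range z) := by
  obtain ⟨j₀, hj₀⟩ := exists_apply_ne_zero hd
  rw [prod_pow_split z hj₀]
  exact Ideal.mul_mem_right _ _ (Ideal.subset_span ⟨j₀, rfl⟩)

theorem sub_single_ne_zero {d : ι →₀ ℕ} {j₀ : ι} (hd : d j₀ ≠ 0)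
    (hne : ∀ j, d ≠ Finsupp.single j 1) : d - Finsupp.single j₀ 1 ≠ 0 := by
  intro h0
  apply hne j₀
  have hle : Finsupp.single j₀ 1 ≤ d := by
    rw [Finsupp.single_le_iff]
    omega
  have := tsub_add_cancel_of_le hle
  rw [h0, zero_add] at this
  exact this.symm

/-- The per-monomial Taylor estimate. -/
theorem taylor_term (x h : ι → R) (d : ι →₀ ℕ) :
    (∏ j, (x j + h j) ^ d j) - (∏ j, x j ^ d j) -
      (∑ j, if d = Finsupp.single j 1 then h j else 0) ∈
    (Ideal.span (Set.range x) ⊔ Ideal.span (Set.range h)) * Ideal.span (Set.range h) := by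
  classical
  by_cases h0 : d = 0
  · subst h0
    have : ∀ j : ι, (0 : ι →₀ ℕ) ≠ Finsupp.single j 1 := by
      intro j hj
      have := DFunLike.congr_fun hj j
      simp at this
    simp [this]
  by_cases h1 : ∃ j, d = Finsupp.single j 1
  · obtain ⟨j₀, rfl⟩ := h1
    have hs : (∑ j, if (Finsupp.single j₀ 1 : ι →₀ ℕ) = Finsupp.single j 1 then h j else 0)
        = h j₀ := by
      rw [Finset.sum_eq_single j₀]
      · simp
      · intro j _ hj
        rw [if_neg]
        intro hc
        exact hj (Finsupp.single_left_injective one_ne_zero hc).symm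
      · simp
    rw [hs, prod_pow_single, prod_pow_single]
    simp
  · push_neg at h1
    have hδ : (∑ j, if d = Finsupp.single j 1 then h j else 0) = 0 := by
      apply Finset.sum_eq_zero
      intro j _
      simp [h1 j]
    rw [hδ, sub_zero]
    obtain ⟨j₀, hj₀⟩ := exists_apply_ne_zero h0
    set d' := d - Finsupp.single j₀ 1 with hd'
    have hd'0 : d' ≠ 0 := sub_single_ne_zero hj₀ h1
    rw [prod_pow_split (fun j => x j + h j) hj₀, prod_pow_split x hj₀]
    have expand : (x j₀ + h j₀) * (∏ j, (x j + h j) ^ d' j) - x j₀ * ∏ j, x j ^ d' j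
        = h j₀ * (∏ j, (x j + h j) ^ d' j)
          + x j₀ * ((∏ j, (x j + h j) ^ d' j) - ∏ j, x j ^ d' j) := by ring
    rw [expand]
    apply add_mem
    · rw [mul_comm (h j₀)]
      apply Ideal.mul_mem_mul
      · have : (∏ j, (x j + h j) ^ d' j) ∈ Ideal.span (Set.range fun j => x j + h j) :=
          prod_pow_mem_span _ hd'0
        refine Ideal.span_le.mpr ?_ this
        rintro _ ⟨j, rfl⟩
        exact add_mem (Submodule.mem_sup_left (Ideal.subset_span ⟨j, rfl⟩))
          (Submodule.mem_sup_right (Ideal.subset_span ⟨j, rfl⟩))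
      · exact Ideal.subset_span ⟨j₀, rfl⟩
    · apply Ideal.mul_mem_mul
      · exact Submodule.mem_sup_left (Ideal.subset_span ⟨j₀, rfl⟩)
      · apply prod_sub_prod_mem
        intro j _
        have hmem : (x j + h j) - x j ∈ Ideal.span (Set.range h) := by
          have he : (x j + h j) - x j = h j := by ring
          rw [he]
          exact Ideal.subset_span ⟨j, rfl⟩
        exact pow_sub_pow_mem hmem (d' j)

end MvHenselAux2


noncomputable def MvHenselFev {R : Type*} [CommRing R] [TopologicalSpace R] {n : ℕ}
    (f : Fin n → MvPowerSeries (Fin n) R) (x : Fin n → R) (i : Fin n) : R :=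
  ∑' d : Fin n →₀ ℕ, MvPowerSeries.coeff d (f i) * ∏ j, x j ^ d j



open Filter MvPowerSeries

/-- multivariate Hensel lemma for restricted power series
(Bourbaki). Let `R` be a complete Hausdorff linearly topologized commutative
ring and `m` a closed ideal of topologically nilpotent elements. If
`f = (f₁,…,fₙ)` are restricted power series (coefficients tending to `0`) with
`f(0) ∈ mⁿ` and Jacobian determinant at `0` a unit (the Jacobian matrix at `0`
is the matrix of coefficients of the linear terms), then `f` has a unique zero
`a ∈ mⁿ`, where `fᵢ(a)` is the (convergent) sum of the evaluated monomials. -/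
theorem mv_hensel_restricted_power_series
    {R : Type*} [CommRing R] [UniformSpace R] [IsUniformAddGroup R]
    [IsTopologicalRing R] [T2Space R] [CompleteSpace R]
    (hlin : ∀ U ∈ nhds (0 : R), ∃ I : Ideal R, (I : Set R) ⊆ U ∧ (I : Set R) ∈ nhds (0 : R))
    (m : Ideal R) (hm : IsClosed (m : Set R))
    (hnilp : ∀ x ∈ m, Tendsto (fun k : ℕ => x ^ k) atTop (nhds 0))
    {n : ℕ} (f : Fin n → MvPowerSeries (Fin n) R)
    (hrestricted : ∀ i, Tendsto (fun d : (Fin n →₀ ℕ) => coeff d (f i)) cofinite (nhds 0))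
    (hf0 : ∀ i, constantCoeff (f i) ∈ m)
    (hJ : IsUnit (Matrix.of fun i j => coeff (Finsupp.single j 1) (f i)).det) :
    ∃! a : Fin n → R, (∀ i, a i ∈ m) ∧
      ∀ i, HasSum (fun d : (Fin n →₀ ℕ) => coeff d (f i) * ∏ j, a j ^ d j) 0 := by
  classical
  haveI hna : NonarchimedeanAddGroup R := MvHenselAux.nonarch hlin
  -- summability of evaluations
  have hsummable : ∀ (x : Fin n → R) i,
      Summable (fun d : Fin n →₀ ℕ => coeff d (f i) * ∏ j, x j ^ d j) := by
    intro x i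
    apply NonarchimedeanAddGroup.summable_of_tendsto_cofinite_zero
    rw [Filter.tendsto_def]
    intro U hU
    obtain ⟨I, hIU, hI⟩ := hlin U hU
    have h1 := (hrestricted i).eventually_mem hI
    exact h1.mono fun d hd => hIU (Ideal.mul_mem_right _ _ hd)
  set F : (Fin n → R) → Fin n → R := MvHenselFev f with hFdef
  have hFsum : ∀ (x : Fin n → R) i,
      HasSum (fun d : Fin n →₀ ℕ => coeff d (f i) * ∏ j, x j ^ d j) (F x i) :=
    fun x i => (hsummable x i).hasSum
  -- the Jacobian matrix and its inverse
  set L : Matrix (Fin n) (Fin n) R :=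
    Matrix.of fun i j => coeff (Finsupp.single j 1) (f i) with hLdef
  obtain ⟨u, hu⟩ := (Matrix.isUnit_iff_isUnit_det L).mpr hJ
  set M : Matrix (Fin n) (Fin n) R := ↑u⁻¹ with hMdef
  have hLM : L * M = 1 := by rw [hMdef, ← hu]; exact u.mul_inv
  have hML : M * L = 1 := by rw [hMdef, ← hu]; exact u.inv_mul
  have key : ∀ (A B : Matrix (Fin n) (Fin n) R), A * B = 1 → ∀ (v : Fin n → R) (i : Fin n),
      (∑ j, A i j * ∑ l, B j l * v l) = v i := by
    intro A B hAB v i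
    have h2 : (∑ j, A i j * ∑ l, B j l * v l) = ∑ l, (∑ j, A i j * B j l) * v l := by
      simp_rw [Finset.mul_sum, Finset.sum_mul]
      rw [Finset.sum_comm]
      simp_rw [mul_assoc]
    rw [h2]
    have h1 : ∀ l, (∑ j, A i j * B j l) = (1 : Matrix (Fin n) (Fin n) R) i l := by
      intro l; rw [← hAB, Matrix.mul_apply]
    simp_rw [h1, Matrix.one_apply, ite_mul, one_mul, zero_mul]
    simp
  -- first Taylor estimate
  have taylor1 : ∀ (x h : Fin n → R) (i : Fin n),
      MvHenselAux.Apx (Ideal.span (Set.range h)) (F (x + h) i - F x i) := by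
    intro x h i
    apply MvHenselAux.Apx.hasSum ((hFsum (x + h) i).sub (hFsum x i))
    intro d
    have he : coeff d (f i) * (∏ j, (x + h) j ^ d j) - coeff d (f i) * (∏ j, x j ^ d j)
        = coeff d (f i) * ((∏ j, (x + h) j ^ d j) - ∏ j, x j ^ d j) := by ring
    rw [he]
    apply Ideal.mul_mem_left
    apply MvHenselAux2.prod_sub_prod_mem
    intro j _
    have hmem : (x + h) j - x j ∈ Ideal.span (Set.range h) := by
      have : (x + h) j - x j = h j := by simp
      rw [this]; exact Ideal.subset_span ⟨j, rfl⟩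
    exact MvHenselAux2.pow_sub_pow_mem hmem (d j)
  -- second Taylor estimate
  have taylor2 : ∀ (x h : Fin n → R) (i : Fin n),
      MvHenselAux.Apx
        ((Ideal.span (Set.range x) ⊔ Ideal.span (Set.range h)) * Ideal.span (Set.range h))
        (F (x + h) i - F x i - ∑ j, L i j * h j) := by
    intro x h i
    have hδ : HasSum
        (fun d : Fin n →₀ ℕ => coeff d (f i) * ∑ j, if d = Finsupp.single j 1 then h j else 0)
        (∑ j, L i j * h j) := by
      have hfin := hasSum_sum_of_ne_finset_zero
        (f := fun d : Fin n →₀ ℕ =>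
          coeff d (f i) * ∑ j, if d = Finsupp.single j 1 then h j else 0)
        (s := Finset.univ.image fun j : Fin n => Finsupp.single j 1) (L := SummationFilter.unconditional _) ?_
      · have hfs : (∑ d ∈ Finset.univ.image fun j : Fin n => Finsupp.single j 1,
            coeff d (f i) * ∑ j, if d = Finsupp.single j 1 then h j else 0)
            = ∑ j, L i j * h j := by
          rw [Finset.sum_congr rfl (fun d _ => by rw [Finset.mul_sum]), Finset.sum_comm]
          apply Finset.sum_congr rfl
          intro j _
          rw [Finset.sum_congr rfl (fun d _ => by rw [mul_ite, mul_zero]),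
            Finset.sum_ite_eq' _ (Finsupp.single j 1) (fun d => coeff d (f i) * h j),
            if_pos (Finset.mem_image_of_mem _ (Finset.mem_univ j))]
          rfl
        rwa [hfs] at hfin
      · intro d hd
        have hne : ∀ j : Fin n, d ≠ Finsupp.single j 1 := by
          intro j hj
          exact hd (hj ▸ Finset.mem_image_of_mem _ (Finset.mem_univ j))
        show coeff d (f i) * (∑ j, if d = Finsupp.single j 1 then h j else 0) = 0
        rw [Finset.sum_eq_zero (fun j _ => if_neg (hne j)), mul_zero]
    apply MvHenselAux.Apx.hasSum (((hFsum (x + h) i).sub (hFsum x i)).sub hδ)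
    intro d
    have he : (coeff d (f i) * (∏ j, (x + h) j ^ d j)
          - coeff d (f i) * (∏ j, x j ^ d j))
          - coeff d (f i) * (∑ j, if d = Finsupp.single j 1 then h j else 0)
        = coeff d (f i) * ((∏ j, (x + h) j ^ d j) - (∏ j, x j ^ d j)
          - ∑ j, if d = Finsupp.single j 1 then h j else 0) := by ring
    rw [he]
    exact Ideal.mul_mem_left _ _ (MvHenselAux2.taylor_term x h d)
  -- the ideal of constant terms
  set S₀ : Finset R := Finset.univ.image fun i => constantCoeff (f i) with hS₀def
  set N : Ideal R := Ideal.span (S₀ : Set R) with hNdef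
  have hNm : N ≤ m := Ideal.span_le.mpr (by
    intro x hx
    obtain ⟨i, -, rfl⟩ := Finset.mem_image.mp (by exact_mod_cast hx)
    exact hf0 i)
  have hNpow : ∀ I : Ideal R, (I : Set R) ∈ nhds 0 → ∃ K, ∀ k ≥ K, N ^ k ≤ I := by
    intro I hI
    apply MvHenselAux.span_pow_le hlin S₀ _ I hI
    intro x hx
    obtain ⟨i, -, rfl⟩ := Finset.mem_image.mp hx
    exact hnilp _ (hf0 i)
  have hF0 : ∀ i, F 0 i ∈ N := by
    intro i
    have h0 : HasSum (fun d : Fin n →₀ ℕ => coeff d (f i) * ∏ j, (0 : Fin n → R) j ^ d j)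
        (coeff 0 (f i) * ∏ j, (0 : Fin n → R) j ^ (0 : Fin n →₀ ℕ) j) := by
      apply hasSum_single (0 : Fin n →₀ ℕ)
      intro d hd
      obtain ⟨j₀, hj₀⟩ := MvHenselAux2.exists_apply_ne_zero hd
      rw [Finset.prod_eq_zero (Finset.mem_univ j₀) (by simp [zero_pow hj₀]), mul_zero]
    have he : F 0 i = coeff 0 (f i) := by
      have := h0.unique (hFsum 0 i)
      rw [← this]
      simp
    rw [he, MvPowerSeries.coeff_zero_eq_constantCoeff]
    exact Ideal.subset_span (by exact_mod_cast Finset.mem_image_of_mem _ (Finset.mem_univ i))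
  -- the Newton iteration
  set step : (Fin n → R) → (Fin n → R) := fun x i => x i - ∑ j, M i j * F x j with hstepdef
  set a : ℕ → Fin n → R := fun k => step^[k] 0 with hadef
  have ha0 : a 0 = 0 := rfl
  have haS : ∀ k i, a (k + 1) i = a k i - ∑ j, M i j * F (a k) j := by
    intro k i
    rw [hadef]
    simp only [Function.iterate_succ_apply']
    rfl
  have inv : ∀ k, (∀ i, a k i ∈ m) ∧ (∀ i, MvHenselAux.Apx N (a k i)) ∧
      (∀ i, MvHenselAux.Apx (N ^ (k + 1)) (F (a k) i)) := by
    intro k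
    induction k with
    | zero =>
      refine ⟨fun i => by rw [ha0]; exact zero_mem m,
        fun i => by rw [ha0]; exact MvHenselAux.Apx.of_mem (zero_mem N), fun i => ?_⟩
      rw [ha0, pow_one]
      exact MvHenselAux.Apx.of_mem (hF0 i)
    | succ k ih =>
      set hh : Fin n → R := fun i => -(∑ j, M i j * F (a k) j) with hhdef
      have hhApx : ∀ i, MvHenselAux.Apx (N ^ (k + 1)) (hh i) := fun i =>
        (MvHenselAux.Apx.sum fun j _ => MvHenselAux.Apx.mul_left _ (ih.2.2 j)).neg
      have heq : a (k + 1) = a k + hh := by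
        funext i
        rw [haS k i]
        show _ = a k i + -(∑ j, M i j * F (a k) j)
        ring
      have hm1 : ∀ i, a (k + 1) i ∈ m := by
        intro i
        rw [heq]
        exact add_mem (ih.1 i) (MvHenselAux.mem_of_apx hlin hm
          (le_trans (Ideal.pow_le_self k.succ_ne_zero) hNm) (hhApx i))
      have hm2 : ∀ i, MvHenselAux.Apx N (a (k + 1) i) := by
        intro i
        rw [heq]
        exact (ih.2.1 i).add ((hhApx i).mono (Ideal.pow_le_self k.succ_ne_zero))
      refine ⟨hm1, hm2, ?_⟩
      intro i
      have hlinsum : (∑ j, L i j * hh j) = -(F (a k) i) := by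
        rw [hhdef]
        have : (∑ j, L i j * -(∑ l, M j l * F (a k) l))
            = -(∑ j, L i j * ∑ l, M j l * F (a k) l) := by
          simp [mul_neg]
        rw [this, key L M hLM (fun l => F (a k) l) i]
      have ht := taylor2 (a k) hh i
      have he2 : F (a k + hh) i - F (a k) i - ∑ j, L i j * hh j = F (a (k + 1)) i := by
        rw [hlinsum, heq]
        ring
      rw [he2] at ht
      intro I hI
      have hIx : Ideal.span (Set.range (a k)) ≤ N ⊔ I :=
        Ideal.span_le.mpr (by rintro _ ⟨i', rfl⟩; exact ih.2.1 i' I hI)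
      have hIh : Ideal.span (Set.range hh) ≤ N ^ (k + 1) ⊔ I :=
        Ideal.span_le.mpr (by rintro _ ⟨i', rfl⟩; exact hhApx i' I hI)
      have hQ : (Ideal.span (Set.range (a k)) ⊔ Ideal.span (Set.range hh))
            * Ideal.span (Set.range hh) ≤ N ^ (k + 1 + 1) ⊔ I := by
        have hstep1 : (Ideal.span (Set.range (a k)) ⊔ Ideal.span (Set.range hh))
              * Ideal.span (Set.range hh) ≤ (N ⊔ I) * (N ^ (k + 1) ⊔ I) := by
          apply Ideal.mul_mono
          · exact sup_le hIx (le_trans hIh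
              (sup_le_sup_right (Ideal.pow_le_self k.succ_ne_zero) I))
          · exact hIh
        refine le_trans hstep1 ?_
        rw [Submodule.mul_sup, Submodule.sup_mul, Submodule.sup_mul]
        have h1 : N * N ^ (k + 1) = N ^ (k + 1 + 1) := (pow_succ' N (k + 1)).symm
        refine sup_le (sup_le ?_ ?_) (sup_le ?_ ?_)
        · rw [h1]; exact le_sup_left
        · exact le_sup_of_le_right Ideal.mul_le_left
        · exact le_sup_of_le_right Ideal.mul_le_right
        · exact le_sup_of_le_right Ideal.mul_le_right
      exact (sup_le hQ le_sup_right) (ht I hI)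
  -- increments are small
  have hgApx : ∀ k i, MvHenselAux.Apx (N ^ (k + 1)) (a (k + 1) i - a k i) := by
    intro k i
    have he : a (k + 1) i - a k i = -(∑ j, M i j * F (a k) j) := by
      rw [haS k i]; ring
    rw [he]
    exact (MvHenselAux.Apx.sum fun j _ =>
      MvHenselAux.Apx.mul_left _ ((inv k).2.2 j)).neg
  -- the sequence converges
  have hbex : ∀ i, ∃ b, Tendsto (fun k => a k i) atTop (nhds b) := by
    intro i
    have hsummg : Summable (fun k => a (k + 1) i - a k i) := by
      apply NonarchimedeanAddGroup.summable_of_tendsto_cofinite_zero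
      rw [Nat.cofinite_eq_atTop, Filter.tendsto_def]
      intro U hU
      obtain ⟨I, hIU, hI⟩ := hlin U hU
      obtain ⟨K, hK⟩ := hNpow I hI
      have hev : ∀ᶠ k in atTop, a (k + 1) i - a k i ∈ U := by
        filter_upwards [eventually_ge_atTop K] with k hk
        exact hIU ((sup_le (hK (k + 1) (by omega)) le_rfl) (hgApx k i I hI))
      exact hev
    obtain ⟨s, hs⟩ := hsummg
    refine ⟨s, ?_⟩
    have := hs.tendsto_sum_nat
    apply this.congr
    intro K
    rw [Finset.sum_range_sub (fun k => a k i) K, ha0]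
    simp
  choose b hb using hbex
  have hbm : ∀ i, b i ∈ m :=
    fun i => hm.mem_of_tendsto (hb i) (Eventually.of_forall fun k => (inv k).1 i)
  have hFb : ∀ i, F b i = 0 := by
    intro i
    apply MvHenselAux.eq_zero_of_forall_mem hlin
    intro I hI
    obtain ⟨K₁, hK₁⟩ := hNpow I hI
    have hev : ∀ᶠ k in atTop, ∀ j, b j - a k j ∈ (I : Set R) := by
      rw [eventually_all]
      intro j
      have ht : Tendsto (fun k => b j - a k j) atTop (nhds 0) := by
        have := (tendsto_const_nhds (x := b j)).sub (hb j)
        simpa using this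
      exact ht.eventually_mem hI
    obtain ⟨k, hk1, hk2⟩ := ((eventually_ge_atTop K₁).and hev).exists
    have hdec : F b i = F (a k) i + (F (a k + (b - a k)) i - F (a k) i) := by
      have he : a k + (b - a k) = b := by funext j; show a k j + (b j - a k j) = b j; ring
      rw [he]; ring
    rw [hdec]
    apply add_mem
    · exact (sup_le (hK₁ (k + 1) (by omega)) le_rfl) ((inv k).2.2 i I hI)
    · have h8 := taylor1 (a k) (b - a k) i I hI
      have h9 : Ideal.span (Set.range (b - a k)) ≤ I := by
        rw [Ideal.span_le]
        rintro _ ⟨j, rfl⟩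
        exact hk2 j
      exact (sup_le h9 le_rfl) h8
  -- uniqueness
  have huniq : ∀ y z : Fin n → R, (∀ i, y i ∈ m) → (∀ i, z i ∈ m) →
      (∀ i, F y i = 0) → (∀ i, F z i = 0) → y = z := by
    intro y z hy hz hFy hFz
    set hd : Fin n → R := fun j => z j - y j with hhdef2
    have hdm : ∀ j, hd j ∈ m := fun j => sub_mem (hz j) (hy j)
    have hQ2 : ∀ i, MvHenselAux.Apx (m * Ideal.span (Set.range hd)) (∑ j, L i j * hd j) := by
      intro i
      have ht := taylor2 y hd i
      have he : y + hd = z := by funext j; show y j + (z j - y j) = z j; ring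
      rw [he, hFz i, hFy i] at ht
      have h2 : (0 : R) - 0 - ∑ j, L i j * hd j = -(∑ j, L i j * hd j) := by ring
      rw [h2] at ht
      have ht2 := ht.neg
      rw [neg_neg] at ht2
      refine ht2.mono ?_
      apply Ideal.mul_mono _ le_rfl
      refine sup_le (Ideal.span_le.mpr ?_) (Ideal.span_le.mpr ?_)
      · rintro _ ⟨j, rfl⟩; exact hy j
      · rintro _ ⟨j, rfl⟩; exact hdm j
    have hdA : ∀ l, MvHenselAux.Apx (m * Ideal.span (Set.range hd)) (hd l) := by
      intro l
      have hrep : hd l = ∑ i, M l i * ∑ j, L i j * hd j := (key M L hML hd l).symm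
      rw [hrep]
      exact MvHenselAux.Apx.sum fun i _ => MvHenselAux.Apx.mul_left _ (hQ2 i)
    have hzero : ∀ l, hd l = 0 := by
      intro l
      apply MvHenselAux.eq_zero_of_forall_mem hlin
      intro I hI
      have hext : ∀ l' : Fin n, ∃ S : Finset R, ↑S ⊆ (m : Set R) ∧
          hd l' ∈ Ideal.span (S : Set R) * Ideal.span (Set.range hd) ⊔ I := by
        intro l'
        obtain ⟨p, hp, q, hq, hpq⟩ := Submodule.mem_sup.mp (hdA l' I hI)
        obtain ⟨S, hS1, hS2⟩ := MvHenselAux.exists_finset_of_mem_mul' hp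
        exact ⟨S, hS1, by
          rw [← hpq]
          exact add_mem (Submodule.mem_sup_left hS2) (Submodule.mem_sup_right hq)⟩
      choose Sf hSf1 hSf2 using hext
      set S : Finset R := Finset.univ.biUnion Sf with hSdef
      set P : Ideal R := Ideal.span (S : Set R) with hPdef
      have hPS : ∀ l', Ideal.span ((Sf l' : Finset R) : Set R) ≤ P :=
        fun l' => Ideal.span_mono (by
          intro x hx
          exact_mod_cast Finset.mem_biUnion.mpr ⟨l', Finset.mem_univ l', by exact_mod_cast hx⟩)
      have hstep2 : Ideal.span (Set.range hd) ≤ P * Ideal.span (Set.range hd) ⊔ I := by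
        rw [Ideal.span_le]
        rintro _ ⟨l', rfl⟩
        exact (sup_le_sup_right (Ideal.mul_mono_left (hPS l')) I) (hSf2 l')
      have hiter : ∀ t : ℕ, Ideal.span (Set.range hd) ≤
          P ^ (t + 1) * Ideal.span (Set.range hd) ⊔ I := by
        intro t
        induction t with
        | zero => rw [pow_one]; exact hstep2
        | succ t iht =>
          refine le_trans iht (sup_le ?_ le_sup_right)
          have h3 : P ^ (t + 1) * Ideal.span (Set.range hd)
              ≤ P ^ (t + 1) * (P * Ideal.span (Set.range hd) ⊔ I) :=
            Ideal.mul_mono le_rfl hstep2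
          refine le_trans h3 ?_
          rw [Submodule.mul_sup]
          refine sup_le ?_ (le_sup_of_le_right Ideal.mul_le_right)
          have h4 : P ^ (t + 1) * (P * Ideal.span (Set.range hd))
              = P ^ (t + 1 + 1) * Ideal.span (Set.range hd) := by
            rw [← mul_assoc, ← pow_succ]
          rw [h4]
          exact le_sup_left
      obtain ⟨K, hK⟩ := MvHenselAux.span_pow_le hlin S
        (fun x hx => hnilp x (by
          obtain ⟨l', -, hx'⟩ := Finset.mem_biUnion.mp hx
          exact hSf1 l' (by exact_mod_cast hx'))) I hI
      have h5 : Ideal.span (Set.range hd) ≤ I := by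
        refine le_trans (hiter K) (sup_le ?_ le_rfl)
        exact le_trans Ideal.mul_le_left (hK (K + 1) (by omega))
      exact h5 (Ideal.subset_span ⟨l, rfl⟩)
    funext l
    have h6 := hzero l
    have h7 : z l - y l = 0 := h6
    have := sub_eq_zero.mp h7
    exact this.symm
  -- conclusion
  refine ⟨b, ⟨hbm, fun i => ?_⟩, ?_⟩
  · have hsb := hFsum b i
    rwa [hFb i] at hsb
  · rintro y ⟨hym, hysum⟩
    have hFy : ∀ i, F y i = 0 := fun i => (hFsum y i).unique (hysum i)
    exact huniq y b hym hbm hFy hFb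
end

section
/- Let (R, m) be a Henselian local domain, f an n-tuple of polynomials over R with f(0) = 0 and Jacobian determinant e := J(0) ≠ 0, and let N = adj(M(0)) where M(0) is the Jacobian matrix at 0. Write f(eX) = e·M(0)·X + e²·g(X) with g having only monomials of degree ≥ 2. Then for every b ∈ mⁿ, setting h(X) = X + N·g(X), the element x = e·h⁻¹(N·b) ∈ e·mⁿ satisfies f(x) = e²·b, where h⁻¹ denotes the inverse of h : mⁿ → mⁿ given by the multivariate Hensel lemma. -/
open MvPolynomial IsLocalRing

/-- over a Henselian local domain, let `f(0) = 0`,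
`e := J(0) ≠ 0`, `N = adj(M(0))`, and write `f(eX) = e·M(0)·X + e²·g(X)` with
`g` of order `≥ 2`. Then for every `b ∈ mⁿ`, any solution `c ∈ mⁿ` of
`h(c) = N·b` (where `h(X) = X + N·g(X)`; such `c` is unique by the multivariate
Hensel lemma) yields `x = e·c ∈ e·mⁿ` with `f(x) = e²·b`. -/
theorem explicit_local_inverse
    {R : Type*} [CommRing R] [IsDomain R] [HenselianLocalRing R] {n : ℕ}
    (f : Fin n → MvPolynomial (Fin n) R)
    (hf0 : ∀ i, eval (0 : Fin n → R) (f i) = 0)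
    (e : R) (he : e = (Matrix.of fun i j => eval (0 : Fin n → R) (pderiv j (f i))).det)
    (hne : e ≠ 0)
    (N : Matrix (Fin n) (Fin n) R)
    (hN : N = (Matrix.of fun i j => eval (0 : Fin n → R) (pderiv j (f i))).adjugate)
    (g : Fin n → MvPolynomial (Fin n) R)
    (hg : ∀ i, g i ∈ (Ideal.span (Set.range (X : Fin n → MvPolynomial (Fin n) R))) ^ 2)
    (hfe : ∀ i, aeval (fun j => C e * X j) (f i) =
      C e * (∑ j, C (eval (0 : Fin n → R) (pderiv j (f i))) * X j) + C (e ^ 2) * g i)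
    (h : Fin n → MvPolynomial (Fin n) R)
    (hh : ∀ i, h i = X i + ∑ j, C (N i j) * g j) :
    ∀ b : Fin n → R, (∀ i, b i ∈ maximalIdeal R) →
      ∀ c : Fin n → R, (∀ i, c i ∈ maximalIdeal R) →
        (∀ i, eval c (h i) = ∑ j, N i j * b j) →
        ∀ i, eval (fun j => e * c j) (f i) = e ^ 2 * b i := by
  intro b _ c _ hhc i
  set M : Matrix (Fin n) (Fin n) R :=
    Matrix.of fun i j => eval (0 : Fin n → R) (pderiv j (f i)) with hMdef
  set a : Fin n → R := fun j => eval c (g j) with ha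
  have hMN : M * N = e • (1 : Matrix (Fin n) (Fin n) R) := by
    rw [hN, Matrix.mul_adjugate, he]
  have hc' : ∀ j, c j = ∑ k, N j k * (b k - a k) := by
    intro j
    have h1 := hhc j
    rw [hh j] at h1
    simp only [eval_add, eval_X, map_sum, eval_mul, eval_C] at h1
    have : c j = (∑ k, N j k * b k) - ∑ k, N j k * a k := by
      rw [← h1]; ring
    rw [this, ← Finset.sum_sub_distrib]
    exact Finset.sum_congr rfl fun k _ => by ring
  have hsum : ∑ j, M i j * c j = e * (b i - a i) := by
    calc ∑ j, M i j * c j = ∑ j, ∑ k, M i j * (N j k * (b k - a k)) := by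
          simp_rw [hc', Finset.mul_sum]
      _ = ∑ k, (∑ j, M i j * N j k) * (b k - a k) := by
          rw [Finset.sum_comm]
          refine Finset.sum_congr rfl fun k _ => ?_
          rw [Finset.sum_mul]
          exact Finset.sum_congr rfl fun j _ => by ring
      _ = ∑ k, (M * N) i k * (b k - a k) := by
          simp_rw [Matrix.mul_apply]
      _ = e * (b i - a i) := by
          rw [hMN]; simp [Matrix.one_apply]
  have heval : eval (fun j => e * c j) (f i)
      = e * (∑ j, M i j * c j) + e ^ 2 * a i := by
    have h2 := congrArg (eval c) (hfe i)
    rw [show (aeval fun j => C e * X j) (f i) = bind₁ (fun j => C e * X j) (f i) from rfl] at h2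
    rw [show (eval c : MvPolynomial (Fin n) R →+* R) = eval₂Hom (RingHom.id R) c from rfl,
      eval₂Hom_bind₁] at h2
    simp only [eval_mul, eval_C, eval_X, eval_add, map_sum, eval₂Hom_X',
      coe_eval₂Hom, eval₂_mul, eval₂_C, eval₂_X, RingHom.id_apply] at h2
    rw [show (eval fun j => e * c j) (f i)
      = eval₂ (RingHom.id R) (fun j => e * c j) (f i) from rfl, h2]
    rw [show eval₂ (RingHom.id R) c
        (C e * ∑ j, C (eval (0:Fin n → R) (pderiv j (f i))) * X j + C (e ^ 2) * g i)
      = eval c (C e * ∑ j, C (eval (0:Fin n → R) (pderiv j (f i))) * X j + C (e ^ 2) * g i)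
      from rfl]
    simp only [eval_add, eval_mul, eval_C, eval_X, map_sum, ha]
    rfl
  rw [heval, hsum]; ring
end
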